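/- Fix t ≥ 1, k with ⌈(t+1)/2⌉ ≤ k ≤ t, and l with 0 ≤ l ≤ t. For any vector v : Fin t → Bool with exactly l entries equal to true, the number of proposals p : Fin t → Bool having exactly k entries true and supported by v (i.e. 2·|{j : v j = p j}| ≥ t) equals ∑_{x=⌈(k+l−⌊t/2⌋)/2⌉}^{k} C(l,x)·C(t−l,k−x). In particular this number, denoted s_{k,l}, depends only on k and l and not on which l entries of v are true. -/

import Mathlib

open Finset

/-- Number of topics on which opinion vector `v` agrees with proposal `p`. -/
def agreeCount {t : ℕ} (v p : Fin t → Bool) : ℕ :=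
  (univ.filter (fun j => v j = p j)).card

/-- Voter `v` supports proposal `p`: agreement on at least half the topics,
    i.e. `2 * |{j : v j = p j}| ≥ t`. -/
def Supports {t : ℕ} (v p : Fin t → Bool) : Prop :=
  t ≤ 2 * agreeCount v p

instance {t : ℕ} (v p : Fin t → Bool) : Decidable (Supports v p) :=
  Nat.decLe _ _

/-- Proposal `p` is supported by a majority of the voters of `V`:
    `2 * |{i : voter i supports p}| ≥ n`. -/
def MajSupported {n t : ℕ} (V : Fin n → Fin t → Bool) (p : Fin t → Bool) : Prop :=
  n ≤ 2 * (univ.filter (fun i => Supports (V i) p)).card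

/-- Column `j` of `V` has majority Y: `2 * |{i : V i j = true}| ≥ n`. -/
def ColMajority {n t : ℕ} (V : Fin n → Fin t → Bool) (j : Fin t) : Prop :=
  n ≤ 2 * (univ.filter (fun i => V i j = true)).card

/-- Number of true entries of a vector. -/
def trueCount {t : ℕ} (p : Fin t → Bool) : ℕ :=
  (univ.filter (fun j => p j = true)).card

/-- Number of matching opinions between the voters of `V` and proposal `p`. -/
def matchCount {n t : ℕ} (V : Fin n → Fin t → Bool) (p : Fin t → Bool) : ℕ :=
  (univ.filter (fun ij : Fin n × Fin t => V ij.1 ij.2 = p ij.2)).card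

/-- the number of k-proposals supported by an l-voter is
∑_{x=⌈(k+l-⌊t/2⌋)/2⌉}^{k} C(l,x)·C(t-l,k-x); in particular it only depends on k and l. -/
theorem skl_formula (t k l : ℕ) (ht : 1 ≤ t) (hk1 : (t + 2) / 2 ≤ k) (hk2 : k ≤ t)
    (hl : l ≤ t) (v : Fin t → Bool) (hv : trueCount v = l) :
    ((univ : Finset (Fin t → Bool)).filter
        (fun p => trueCount p = k ∧ Supports v p)).card =
      ∑ x ∈ Finset.Icc ((k + l - t / 2 + 1) / 2) k,
        Nat.choose l x * Nat.choose (t - l) (k - x) := by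
  classical
  set S : Finset (Fin t) := univ.filter (fun j => v j = true) with hS
  set Sc : Finset (Fin t) := univ.filter (fun j => ¬ (v j = true)) with hSc
  have hSl : S.card = l := hv
  have hScl : Sc.card = t - l := by
    have h := card_filter_add_card_filter_not (s := (univ : Finset (Fin t)))
      (fun j => v j = true)
    rw [card_univ, Fintype.card_fin, ← hS, ← hSc] at h
    omega
  have hdisj : Disjoint S Sc := by
    rw [hS, hSc]; exact disjoint_filter_filter_not univ univ _
  -- basic counting facts for each p
  have hsplit : ∀ p : Fin t → Bool,
      (S.filter (fun j => p j = true)).card + (Sc.filter (fun j => p j = true)).card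
        = trueCount p := by
    intro p
    rw [trueCount, ← card_union_of_disjoint (disjoint_filter_filter hdisj)]
    congr 1
    rw [hS, hSc, ← filter_union, filter_union_filter_not_eq]
  have hScsplit : ∀ p : Fin t → Bool,
      (Sc.filter (fun j => p j = true)).card + (Sc.filter (fun j => ¬ (p j = true))).card
        = t - l := by
    intro p
    rw [card_filter_add_card_filter_not, hScl]
  have hagree : ∀ p : Fin t → Bool,
      agreeCount v p = (S.filter (fun j => p j = true)).card
        + (Sc.filter (fun j => ¬ (p j = true))).card := by
    intro p
    rw [agreeCount, ← card_union_of_disjoint (disjoint_filter_filter hdisj)]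
    congr 1
    ext j
    simp only [hS, hSc, mem_union, mem_filter, mem_univ, true_and]
    cases hvj : v j <;> cases hpj : p j <;> simp
  have hxleS : ∀ p : Fin t → Bool, (S.filter (fun j => p j = true)).card ≤ l := by
    intro p; rw [← hSl]; exact card_filter_le _ _
  -- reconstruction of filters from pairs of subsets
  have hrecon : ∀ A B : Finset (Fin t), A ⊆ S → B ⊆ Sc →
      S.filter (fun j => decide (j ∈ A ∪ B) = true) = A ∧
      Sc.filter (fun j => decide (j ∈ A ∪ B) = true) = B := by
    intro A B hA hB
    constructor
    · ext j
      simp only [mem_filter, decide_eq_true_eq, mem_union]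
      constructor
      · rintro ⟨hjS, hj | hj⟩
        · exact hj
        · exact absurd hjS (disjoint_right.1 hdisj (hB hj))
      · intro hj; exact ⟨hA hj, Or.inl hj⟩
    · ext j
      simp only [mem_filter, decide_eq_true_eq, mem_union]
      constructor
      · rintro ⟨hjSc, hj | hj⟩
        · exact absurd hjSc (disjoint_right.1 hdisj.symm (hA hj))
        · exact hj
      · intro hj; exact ⟨hB hj, Or.inr hj⟩
  -- fiberwise decomposition by x = number of true entries in S
  rw [card_eq_sum_card_fiberwise
    (f := fun p : Fin t → Bool => (S.filter (fun j => p j = true)).card)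
    (t := Finset.Icc ((k + l - t / 2 + 1) / 2) k)]
  · refine Finset.sum_congr rfl ?_
    intro x hx
    rw [Finset.mem_Icc] at hx
    have hcard : Nat.choose l x * Nat.choose (t - l) (k - x)
        = ((S.powersetCard x) ×ˢ (Sc.powersetCard (k - x))).card := by
      rw [card_product, card_powersetCard, card_powersetCard, hSl, hScl]
    rw [hcard]
    apply card_nbij'
      (i := fun p : Fin t → Bool =>
        (S.filter (fun j => p j = true), Sc.filter (fun j => p j = true)))
      (j := fun AB : Finset (Fin t) × Finset (Fin t) =>
        (fun jj => decide (jj ∈ AB.1 ∪ AB.2)))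
    · intro p hp
      rw [mem_coe, mem_filter, mem_filter] at hp
      obtain ⟨⟨-, hpk, hps⟩, hfx⟩ := hp
      rw [mem_coe, mem_product, mem_powersetCard, mem_powersetCard]
      dsimp only
      have h1 := hsplit p
      rw [hpk] at h1
      exact ⟨⟨filter_subset _ _, hfx⟩, filter_subset _ _, by omega⟩
    · rintro ⟨A, B⟩ hAB
      rw [mem_coe, mem_product, mem_powersetCard, mem_powersetCard] at hAB
      obtain ⟨⟨hA1, hA2⟩, hB1, hB2⟩ := hAB
      obtain ⟨hA, hB⟩ := hrecon A B hA1 hB1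
      rw [mem_coe, mem_filter, mem_filter]
      dsimp only at *
      have h1 := hsplit (fun jj => decide (jj ∈ A ∪ B))
      have h2 := hScsplit (fun jj => decide (jj ∈ A ∪ B))
      have h3 := hagree (fun jj => decide (jj ∈ A ∪ B))
      rw [hA] at h1 h3
      rw [hB] at h1 h2
      refine ⟨⟨mem_univ _, by omega, ?_⟩, by rw [hA, hA2]⟩
      show t ≤ 2 * agreeCount v _
      rw [h3]
      omega
    · intro p hp
      rw [mem_coe, mem_filter, mem_filter] at hp
      funext jj
      cases hpj : p jj <;> cases hvj : v jj <;>
        simp [hS, hSc, hpj, hvj]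
    · rintro ⟨A, B⟩ hAB
      rw [mem_coe, mem_product, mem_powersetCard, mem_powersetCard] at hAB
      obtain ⟨⟨hA1, hA2⟩, hB1, hB2⟩ := hAB
      obtain ⟨hA, hB⟩ := hrecon A B hA1 hB1
      exact Prod.ext hA hB
  · intro p hp
    rw [mem_coe, mem_filter] at hp
    obtain ⟨-, hpk, hps⟩ := hp
    have h1 := hsplit p
    have h2 := hScsplit p
    have h3 := hagree p
    have h4 := hxleS p
    rw [hpk] at h1
    have hps' : t ≤ 2 * agreeCount v p := hps
    rw [h3] at hps'
    rw [mem_coe, Finset.mem_Icc]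
    dsimp only
    omega
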